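/- Let f : [0,1] → ℝ be twice continuously differentiable with f(0) = f(1) = 0. Then sup_{y ∈ [0,1]} |f(y)| ≤ ∫₀¹ |f''(y)| dy. -/

import Mathlib

/-- Auxiliary: integral of a continuous function over a subinterval of `[0,1]`
is bounded by the integral of its absolute value over `[0,1]`. -/
lemma aux_abs_int (h : ℝ → ℝ) (hc : Continuous h) (u v : ℝ)
    (hu : u ∈ Set.Icc (0:ℝ) 1) (hv : v ∈ Set.Icc (0:ℝ) 1) :
    |∫ s in u..v, h s| ≤ ∫ s in (0:ℝ)..1, |h s| := by
  have hnn : 0 ≤ᵐ[MeasureTheory.volume.restrict (Set.Ioc (0:ℝ) 1)] fun s => |h s| :=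
    Filter.Eventually.of_forall fun x => abs_nonneg _
  have hint : IntervalIntegrable (fun s => |h s|) MeasureTheory.volume 0 1 :=
    hc.abs.intervalIntegrable 0 1
  have key : ∀ a b : ℝ, a ∈ Set.Icc (0:ℝ) 1 → b ∈ Set.Icc (0:ℝ) 1 → a ≤ b →
      |∫ s in a..b, h s| ≤ ∫ s in (0:ℝ)..1, |h s| := by
    intro a b ha hb hab
    calc |∫ s in a..b, h s| ≤ ∫ s in a..b, |h s| :=
          intervalIntegral.abs_integral_le_integral_abs hab
      _ ≤ ∫ s in (0:ℝ)..1, |h s| :=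
          intervalIntegral.integral_mono_interval ha.1 hab hb.2 hnn hint
  rcases le_total u v with huv | huv
  · exact key u v hu hv huv
  · have := key v u hv hu huv
    rwa [intervalIntegral.integral_symm, abs_neg]

/-- If `f ∈ C²([0,1])` (here: `C²` on `ℝ`) with `f 0 = f 1 = 0`, then
`sup_{y ∈ [0,1]} |f y| ≤ ∫₀¹ |f''|`. -/
theorem stmt_0 (f : ℝ → ℝ) (hf : ContDiff ℝ 2 f) (h0 : f 0 = 0) (h1 : f 1 = 0) :
    ∀ y ∈ Set.Icc (0:ℝ) 1, |f y| ≤ ∫ s in (0:ℝ)..1, |deriv (deriv f) s| := by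
  intro y hy
  set M := ∫ s in (0:ℝ)..1, |deriv (deriv f) s| with hM
  have hf' : ContDiff ℝ ((1:ℕ) + 1) f := by exact_mod_cast hf
  have hfd : Differentiable ℝ f := (contDiff_succ_iff_deriv.mp hf').1
  have hg1 : ContDiff ℝ 1 (deriv f) := (contDiff_succ_iff_deriv.mp hf').2.2
  have hgd : Differentiable ℝ (deriv f) := hg1.differentiable one_ne_zero
  have hg'c : Continuous (deriv (deriv f)) := hg1.continuous_deriv le_rfl
  -- Rolle: ∃ c ∈ (0,1), f' c = 0
  obtain ⟨c, hc, hc0⟩ := exists_deriv_eq_zero (by norm_num : (0:ℝ) < 1)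
    hf.continuous.continuousOn (h0.trans h1.symm)
  have hcI : c ∈ Set.Icc (0:ℝ) 1 := ⟨hc.1.le, hc.2.le⟩
  -- |f' t| ≤ M for t ∈ [0,1]
  have hkey : ∀ t ∈ Set.Icc (0:ℝ) 1, |deriv f t| ≤ M := by
    intro t ht
    have hftc : ∫ s in c..t, deriv (deriv f) s = deriv f t - deriv f c :=
      intervalIntegral.integral_deriv_eq_sub (fun x _ => hgd x)
        (hg'c.intervalIntegrable c t)
    have : |deriv f t| = |∫ s in c..t, deriv (deriv f) s| := by
      rw [hftc, hc0, sub_zero]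
    rw [this]
    exact aux_abs_int _ hg'c c t hcI ht
  -- f y = ∫ 0..y f'
  have hftc2 : ∫ s in (0:ℝ)..y, deriv f s = f y - f 0 :=
    intervalIntegral.integral_deriv_eq_sub (fun x _ => hfd x)
      (hg1.continuous.intervalIntegrable 0 y)
  have hfy : f y = ∫ s in (0:ℝ)..y, deriv f s := by rw [hftc2, h0, sub_zero]
  have hMnn : 0 ≤ M := intervalIntegral.integral_nonneg (by norm_num)
    (fun x _ => abs_nonneg _)
  calc |f y| = |∫ s in (0:ℝ)..y, deriv f s| := by rw [hfy]
    _ ≤ ∫ s in (0:ℝ)..y, |deriv f s| :=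
        intervalIntegral.abs_integral_le_integral_abs hy.1
    _ ≤ ∫ _ in (0:ℝ)..y, M := by
        apply intervalIntegral.integral_mono_on hy.1
          (hg1.continuous.abs.intervalIntegrable 0 y)
          intervalIntegrable_const
        intro x hx
        exact hkey x ⟨hx.1, hx.2.trans hy.2⟩
    _ = y * M := by simp
    _ ≤ 1 * M := mul_le_mul_of_nonneg_right hy.2 hMnn
    _ = M := one_mul M
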